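/- Let p be an odd prime and let m ≥ 2 be an even natural number. Set ε = ((−1)^{(p−1)/2})^{m/2} ∈ {+1, −1}. Then the cardinality of O_m(1_m) = {γ ∈ GL_m(𝔽_p) : γᵀ γ = 1_m}, viewed as an integer, equals 2 · p^{(m²−2m)/4} · (p^{m/2} − ε) · ∏_{r=1}^{m/2−1} (p^{2r} − 1). -/

import Mathlib

open Matrix Finset

set_option linter.unusedSectionVars false
set_option maxHeartbeats 1000000

section chars
variable {F : Type*} [Field F] [Fintype F] [DecidableEq F]

local notation "χ" => quadraticChar F
local notation "q" => (Fintype.card F : ℤ)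

lemma chi_sq_one {a : F} (ha : a ≠ 0) : χ a * χ a = 1 := by
  rcases quadraticChar_dichotomy ha with h | h <;> rw [h] <;> norm_num

lemma sum_chi_sq (hF : ringChar F ≠ 2) : ∑ a : F, χ a * χ a = q - 1 := by
  rw [← Finset.sum_compl_add_sum ({0} : Finset F) (fun a => χ a * χ a)]
  have h1 : ∑ a ∈ ({0} : Finset F), χ a * χ a = 0 := by simp
  have h2 : ∑ a ∈ ({0}ᶜ : Finset F), χ a * χ a = ∑ a ∈ ({0}ᶜ : Finset F), 1 := by
    refine Finset.sum_congr rfl fun a ha => ?_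
    simp only [Finset.mem_compl, Finset.mem_singleton] at ha
    exact chi_sq_one ha
  rw [h1, h2, add_zero, Finset.sum_const, Finset.card_compl]
  simp [Finset.card_singleton, mul_comm]
  rw [Nat.cast_sub Fintype.card_pos]
  simp

lemma sum_chi_shift (hF : ringChar F ≠ 2) (e b : F) (he : e ≠ 0) :
    ∑ a : F, χ (e * (b - a)) = 0 := by
  rw [← quadraticChar_sum_zero hF]
  exact Finset.sum_nbij' (fun a => e * (b - a)) (fun c => b - e⁻¹ * c)
    (by simp) (by simp) (by intro a _; field_simp; ring) (by intro a _; field_simp; ring) (fun _ _ => rfl)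

lemma sum_chi_mul_chi (hF : ringChar F ≠ 2) (b : F) :
    ∑ a : F, χ a * χ (b - a) = if b = 0 then χ (-1) * (q - 1) else -χ (-1) := by
  split_ifs with hb
  · subst hb
    have h : ∀ a : F, χ a * χ (0 - a) = χ (-1) * (χ a * χ a) := by
      intro a
      rw [zero_sub, show -a = -1 * a by ring, _root_.map_mul]
      ring
    rw [Finset.sum_congr rfl fun a _ => h a, ← Finset.mul_sum, sum_chi_sq hF]
  · rw [← Finset.sum_subset (Finset.subset_univ ({0}ᶜ : Finset F))
      (by intro x _ hx; simp only [Finset.mem_compl, Finset.mem_singleton, not_not] at hx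
          simp [hx])]
    have key : ∀ a ∈ ({0}ᶜ : Finset F), χ a * χ (b - a) = χ (b * a⁻¹ - 1) := by
      intro a ha
      simp only [Finset.mem_compl, Finset.mem_singleton] at ha
      have h1 : b * a⁻¹ - 1 = (b - a) * a⁻¹ := by field_simp
      have hinv : χ a⁻¹ = χ a := by
        have h4 : χ a⁻¹ * χ a = 1 := by
          rw [← _root_.map_mul, inv_mul_cancel₀ ha, _root_.map_one]
        rcases quadraticChar_dichotomy ha with h | h <;> rw [h] at h4 ⊢ <;> linarith
      rw [h1, _root_.map_mul, hinv]
      ring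
    rw [Finset.sum_congr rfl key]
    have hbij : ∑ a ∈ ({0}ᶜ : Finset F), χ (b * a⁻¹ - 1) = ∑ s ∈ ({-1}ᶜ : Finset F), χ s := by
      refine Finset.sum_nbij' (fun a => b * a⁻¹ - 1) (fun s => b * (s + 1)⁻¹) ?_ ?_ ?_ ?_ ?_
      · intro a ha
        simp only [Finset.mem_compl, Finset.mem_singleton] at *
        intro h; apply ha
        have h2 : b * a⁻¹ = 0 := by linear_combination h
        rcases mul_eq_zero.mp h2 with h' | h'
        · exact absurd h' hb
        · exact inv_eq_zero.mp h'
      · intro s hs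
        simp only [Finset.mem_compl, Finset.mem_singleton] at *
        have : s + 1 ≠ 0 := fun h => hs (by linear_combination h)
        simp [hb, this]
      · intro a ha
        simp only [Finset.mem_compl, Finset.mem_singleton] at ha
        field_simp
        rw [sub_add_cancel, div_self hb]
      · intro s hs
        simp only [Finset.mem_compl, Finset.mem_singleton] at hs
        have h3 : s + 1 ≠ 0 := fun h => hs (by linear_combination h)
        field_simp
        ring
      · intros; rfl
    rw [hbij]
    have h2 : ∑ s ∈ ({-1}ᶜ : Finset F), χ s = (∑ s : F, χ s) - χ (-1) := by
      rw [← Finset.sum_compl_add_sum ({-1} : Finset F) (fun s => χ s)]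
      simp
    rw [h2, quadraticChar_sum_zero hF]; ring
end chars


section sphere
variable (F : Type*) [Field F] [Fintype F] [DecidableEq F]

local notation "χ" => quadraticChar F
local notation "q" => (Fintype.card F : ℤ)

def sc (n : ℕ) (b : F) : ℕ := Fintype.card {v : Fin n → F // ∑ i, v i * v i = b}

variable {F}

lemma sqrt_filter (a : F) :
    ({x : F | x ^ 2 = a} : Set F).toFinset = Finset.univ.filter (fun x => x * x = a) := by
  ext x; simp [sq]

lemma card_sqrts (hF : ringChar F ≠ 2) (a : F) :
    ((Finset.univ.filter (fun x : F => x * x = a)).card : ℤ) = χ a + 1 := by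
  rw [← sqrt_filter, quadraticChar_card_sqrts hF]

lemma sc_succ (n : ℕ) (b : F) : sc F (n+1) b = ∑ x : F, sc F n (b - x * x) := by
  unfold sc
  have e1 : {v : Fin (n+1) → F // ∑ i, v i * v i = b} ≃
      {xw : F × (Fin n → F) // ∑ i, xw.2 i * xw.2 i = b - xw.1 * xw.1} := by
    refine ((Fin.consEquiv (fun _ => F)).subtypeEquiv ?_).symm
    rintro ⟨x, w⟩
    simp only [Fin.consEquiv_apply, Fin.sum_univ_succ, Fin.cons_zero, Fin.cons_succ]
    constructor
    · intro h; linear_combination h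
    · intro h; linear_combination h
  rw [Fintype.card_congr e1,
    Fintype.card_congr (Equiv.subtypeProdEquivSigmaSubtype
      (fun (x : F) (w : Fin n → F) => ∑ i, w i * w i = b - x * x)), Fintype.card_sigma]

lemma sum_over_squares (hF : ringChar F ≠ 2) (g : F → ℤ) :
    ∑ x : F, g (x * x) = ∑ a : F, (χ a + 1) * g a := by
  rw [← Finset.sum_fiberwise Finset.univ (fun x : F => x * x) (fun x => g (x * x))]
  refine Finset.sum_congr rfl fun a _ => ?_
  have h1 : ∀ x ∈ Finset.univ.filter (fun x : F => x * x = a), g (x * x) = g a := by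
    intro x hx
    simp only [Finset.mem_filter] at hx
    rw [hx.2]
  rw [Finset.sum_congr rfl h1, Finset.sum_const, nsmul_eq_mul, card_sqrts hF]

lemma sc_cast_succ (hF : ringChar F ≠ 2) (n : ℕ) (b : F) :
    (sc F (n+1) b : ℤ) = ∑ a : F, (χ a + 1) * (sc F n (b - a) : ℤ) := by
  rw [sc_succ, Nat.cast_sum, ← sum_over_squares hF (fun a => (sc F n (b - a) : ℤ))]

lemma sc_one (hF : ringChar F ≠ 2) (b : F) : (sc F 1 b : ℤ) = χ b + 1 := by
  have e1 : {v : Fin 1 → F // ∑ i, v i * v i = b} ≃ {x : F // x * x = b} := by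
    refine Equiv.subtypeEquiv (Equiv.funUnique (Fin 1) F) fun v => ?_
    simp [Fin.sum_univ_succ]
  unfold sc
  rw [Fintype.card_congr e1, Fintype.card_subtype, card_sqrts hF]
end sphere

section formulas
variable {F : Type*} [Field F] [Fintype F] [DecidableEq F]
local notation "χ" => quadraticChar F
local notation "q" => (Fintype.card F : ℤ)

lemma neg_one_pow_ne (t : ℕ) : ((-1 : F)^t) ≠ 0 := pow_ne_zero t (neg_ne_zero.mpr one_ne_zero)

lemma sc_even_step (hF : ringChar F ≠ 2) (t : ℕ)
    (IH : ∀ c : F, (sc F (2*t+1) c : ℤ) = q^(2*t) + χ ((-1)^t * c) * q^t) (b : F) :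
    (sc F (2*t+2) b : ℤ) =
      q^(2*t+1) + χ ((-1)^(t+1)) * (if b = 0 then q - 1 else -1) * q^t := by
  rw [sc_cast_succ hF]
  have expand : ∀ a : F, (χ a + 1) * (sc F (2*t+1) (b - a) : ℤ) =
      χ a * q^(2*t) + χ ((-1)^t) * (χ a * χ (b - a)) * q^t
        + q^(2*t) + χ ((-1)^t * (b - a)) * q^t := by
    intro a
    rw [IH (b - a), _root_.map_mul]
    ring
  rw [Finset.sum_congr rfl fun a _ => expand a]
  rw [Finset.sum_add_distrib, Finset.sum_add_distrib, Finset.sum_add_distrib]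
  have hA : ∑ x : F, χ x * q^(2*t) = 0 := by
    rw [← Finset.sum_mul, quadraticChar_sum_zero hF, zero_mul]
  have hB : ∑ x : F, χ ((-1:F)^t) * (χ x * χ (b - x)) * q^t
      = χ ((-1:F)^t) * (if b = 0 then χ (-1) * (q-1) else -χ (-1)) * q^t := by
    rw [← Finset.sum_mul, ← Finset.mul_sum, sum_chi_mul_chi hF b]
  have hC : ∑ _x : F, (q:ℤ)^(2*t) = q^(2*t+1) := by
    rw [Finset.sum_const, Finset.card_univ, nsmul_eq_mul]; ring
  have hD : ∑ x : F, χ ((-1:F)^t * (b - x)) * q^t = 0 := by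
    rw [← Finset.sum_mul, sum_chi_shift hF _ b (neg_one_pow_ne t), zero_mul]
  rw [hA, hB, hC, hD]
  have hm : χ ((-1 : F)^(t+1)) = χ ((-1)^t) * χ (-1) := by
    rw [pow_succ, _root_.map_mul]
  rw [hm]
  split_ifs <;> ring

lemma sc_odd_formula (hF : ringChar F ≠ 2) :
    ∀ t : ℕ, ∀ b : F, (sc F (2*t+1) b : ℤ) = q^(2*t) + χ ((-1)^t * b) * q^t := by
  intro t
  induction t with
  | zero => intro b; rw [show 2*0+1 = 1 by rfl, sc_one hF]; simp; ring
  | succ t IH =>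
    intro b
    have heven := sc_even_step hF t IH
    rw [show 2*(t+1)+1 = (2*t+2)+1 by ring, sc_cast_succ hF]
    have expand : ∀ a : F, (χ a + 1) * (sc F (2*t+2) (b - a) : ℤ) =
        χ a * q^(2*t+1) + χ ((-1)^(t+1)) * (χ a * (-1 + if a = b then q else 0)) * q^t
          + q^(2*t+1) + χ ((-1)^(t+1)) * (-1 + if a = b then q else 0) * q^t := by
      intro a
      rw [heven (b - a)]
      have hw : (if b - a = 0 then q - 1 else -1) = (-1 + if a = b then q else 0) := by
        by_cases h : a = b
        · simp [h]; ring
        · have h2 : b - a ≠ 0 := fun hh => h (by linear_combination -hh)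
          simp [h, h2]
      rw [hw]; ring
    rw [Finset.sum_congr rfl fun a _ => expand a]
    rw [Finset.sum_add_distrib, Finset.sum_add_distrib, Finset.sum_add_distrib]
    have s1 : ∑ a : F, (χ a * (-1 + if a = b then q else 0)) = q * χ b := by
      have : ∀ a : F, χ a * (-1 + if a = b then q else 0)
          = -χ a + (if a = b then q * χ b else 0) := by
        intro a
        by_cases h : a = b <;> simp [h] <;> ring
      rw [Finset.sum_congr rfl fun a _ => this a, Finset.sum_add_distrib]
      rw [Finset.sum_neg_distrib, quadraticChar_sum_zero hF]
      simp
    have s2 : ∑ a : F, (-1 + if a = b then q else 0 : ℤ) = -q + q := by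
      rw [Finset.sum_add_distrib]
      simp [Finset.card_univ]
    have hA : ∑ x : F, χ x * q^(2*t+1) = 0 := by
      rw [← Finset.sum_mul, quadraticChar_sum_zero hF, zero_mul]
    have hB : ∑ x : F, χ ((-1:F)^(t+1)) * (χ x * (-1 + if x = b then q else 0)) * q^t
        = χ ((-1:F)^(t+1)) * (q * χ b) * q^t := by
      rw [← Finset.sum_mul, ← Finset.mul_sum, s1]
    have hC : ∑ _x : F, (q:ℤ)^(2*t+1) = q^(2*t+2) := by
      rw [Finset.sum_const, Finset.card_univ, nsmul_eq_mul]; ring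
    have hD : ∑ x : F, χ ((-1:F)^(t+1)) * (-1 + if x = b then q else 0) * q^t = 0 := by
      rw [← Finset.sum_mul, ← Finset.mul_sum, s2]; ring
    rw [hA, hB, hC, hD, _root_.map_mul]
    ring
end formulas



section orth
variable {F : Type*} [Field F] [Fintype F] [DecidableEq F]

/-- reflection in the vector a -/
def refl' (n : ℕ) (a : Fin n → F) : Matrix (Fin n) (Fin n) F :=
  1 - (2 * (a ⬝ᵥ a)⁻¹) • vecMulVec a a

lemma vecMulVec_transpose' (n : ℕ) (a : Fin n → F) : (vecMulVec a a)ᵀ = vecMulVec a a := by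
  ext i j; simp [vecMulVec_apply, mul_comm]

lemma vecMulVec_mul_vecMulVec (n : ℕ) (a : Fin n → F) :
    vecMulVec a a * vecMulVec a a = (a ⬝ᵥ a) • vecMulVec a a := by
  ext i j
  simp only [mul_apply, vecMulVec_apply, Matrix.smul_apply, smul_eq_mul, dotProduct]
  rw [Finset.sum_mul]
  refine Finset.sum_congr rfl fun k _ => ?_
  ring

lemma refl'_orth (n : ℕ) (a : Fin n → F) (ha : a ⬝ᵥ a ≠ 0) :
    (refl' n a)ᵀ * refl' n a = 1 := by
  unfold refl'
  rw [transpose_sub, transpose_one, transpose_smul, vecMulVec_transpose']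
  have key := _root_.vecMulVec_mul_vecMulVec n a
  simp only [sub_mul, mul_sub, mul_one, one_mul, smul_mul_assoc, Matrix.mul_smul,
    smul_smul, key]
  have hco : (2 * (a ⬝ᵥ a)⁻¹) * ((2 * (a ⬝ᵥ a)⁻¹) * (a ⬝ᵥ a))
      = 2 * (a ⬝ᵥ a)⁻¹ + 2 * (a ⬝ᵥ a)⁻¹ := by field_simp; ring
  rw [hco, add_smul]
  abel

lemma vecMulVec_mulVec' (n : ℕ) (a u : Fin n → F) :
    vecMulVec a a *ᵥ u = (a ⬝ᵥ u) • a := by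
  ext i
  simp only [mulVec, vecMulVec_apply, dotProduct, Pi.smul_apply, smul_eq_mul]
  rw [Finset.sum_mul]
  refine Finset.sum_congr rfl fun k _ => ?_
  ring

lemma refl'_mulVec (n : ℕ) (a u : Fin n → F) :
    refl' n a *ᵥ u = u - (2 * (a ⬝ᵥ a)⁻¹ * (a ⬝ᵥ u)) • a := by
  unfold refl'
  rw [sub_mulVec, one_mulVec, smul_mulVec, vecMulVec_mulVec', smul_smul, mul_assoc]

lemma twoNeZeroF (hF : ringChar F ≠ 2) : (2 : F) ≠ 0 := Ring.two_ne_zero hF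

/-- transitivity: any unit vector is the image of e₀ under an orthogonal matrix -/
lemma exists_orth_mulVec (hF : ringChar F ≠ 2) (n : ℕ) (v : Fin (n+1) → F)
    (hv : v ⬝ᵥ v = 1) :
    ∃ B : Matrix (Fin (n+1)) (Fin (n+1)) F, Bᵀ * B = 1 ∧ B *ᵥ Pi.single 0 1 = v := by
  set u : Fin (n+1) → F := Pi.single 0 1 with hu
  have huu : u ⬝ᵥ u = 1 := by
    rw [hu, single_dotProduct]
    simp
  set s : F := u ⬝ᵥ v with hs
  have hvu : v ⬝ᵥ u = s := by rw [hs, dotProduct_comm]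
  have h2 : (2 : F) ≠ 0 := twoNeZeroF hF
  by_cases h1 : (u - v) ⬝ᵥ (u - v) ≠ 0
  · refine ⟨refl' (n+1) (u - v), refl'_orth _ _ h1, ?_⟩
    have hd : (u - v) ⬝ᵥ (u - v) = 2 - 2*s := by
      rw [sub_dotProduct, dotProduct_sub, dotProduct_sub, huu, hv, hvu, ← hs]; ring
    have hdu : (u - v) ⬝ᵥ u = 1 - s := by
      rw [sub_dotProduct, huu, hvu]
    have hs1 : (1 : F) - s ≠ 0 := by
      intro h
      apply h1
      rw [hd]
      linear_combination 2 * h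
    rw [refl'_mulVec, hd, hdu]
    have hcoef : 2 * (2 - 2*s)⁻¹ * (1 - s) = 1 := by
      have : (2 : F) - 2*s = 2 * (1 - s) := by ring
      rw [this, mul_inv]
      field_simp
    rw [hcoef, one_smul]
    abel
  · push_neg at h1
    have hd : (u + v) ⬝ᵥ (u + v) = 2 + 2*s := by
      rw [add_dotProduct, dotProduct_add, dotProduct_add, huu, hv, hvu, ← hs]; ring
    have hs1 : s = 1 := by
      have : (2:F) - 2*s = 0 := by
        rw [← h1, sub_dotProduct, dotProduct_sub, dotProduct_sub, huu, hv, hvu, ← hs]; ring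
      have h4 : (2:F) * (1 - s) = 0 := by linear_combination this
      rcases mul_eq_zero.mp h4 with h' | h'
      · exact absurd h' h2
      · linear_combination -h'
    have hd4 : (u + v) ⬝ᵥ (u + v) = 4 := by rw [hd, hs1]; ring
    have hd4' : (u + v) ⬝ᵥ (u + v) ≠ 0 := by
      rw [hd4]
      intro h
      apply h2
      have h4 : (2:F) * 2 = 0 := by linear_combination h
      rcases mul_eq_zero.mp h4 with h' | h' <;> exact h'
    have hvv1 : v ⬝ᵥ v ≠ 0 := by rw [hv]; exact one_ne_zero
    refine ⟨refl' (n+1) v * refl' (n+1) (u + v), ?_, ?_⟩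
    · rw [transpose_mul, mul_assoc, ← mul_assoc (refl' (n+1) v)ᵀ, refl'_orth _ _ hvv1,
        one_mul, refl'_orth _ _ hd4']
    · rw [← mulVec_mulVec, refl'_mulVec, refl'_mulVec]
      have hau : (u + v) ⬝ᵥ u = 2 := by rw [add_dotProduct, huu, hvu, hs1]; ring
      rw [hd4, hau]
      have hcoef : 2 * (4:F)⁻¹ * 2 = 1 := by
        have h4 : (4:F) = 2 * 2 := by ring
        rw [h4, mul_inv]
        field_simp
      rw [hcoef, one_smul, hv]
      have : u - (u + v) = -v := by abel
      rw [this]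
      have hvnv : v ⬝ᵥ (-v) = -1 := by rw [dotProduct_neg, hv]
      rw [hvnv]
      have hcoef2 : 2 * (1:F)⁻¹ * (-1) = -2 := by norm_num
      rw [hcoef2]
      ext i
      simp
      ring
end orth



section grp
variable {F : Type*} [Field F] [Fintype F] [DecidableEq F]

variable (F) in
def Ogrp (n : ℕ) := {A : Matrix (Fin n) (Fin n) F // Aᵀ * A = 1}

noncomputable instance OgrpFintype (n : ℕ) : Fintype (Ogrp F n) := by
  unfold Ogrp; infer_instance

lemma card_Ogrp_zero : Fintype.card (Ogrp F 0) = 1 := by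
  have : Unique (Ogrp F 0) := {
    default := ⟨1, by simp⟩
    uniq := fun A => Subtype.ext (Subsingleton.elim _ _) }
  exact Fintype.card_unique

def matRed (n : ℕ) (A : Matrix (Fin (n+1)) (Fin (n+1)) F) : Matrix (Fin n) (Fin n) F :=
  of fun i j => A i.succ j.succ

def matEmb (n : ℕ) (δ : Matrix (Fin n) (Fin n) F) : Matrix (Fin (n+1)) (Fin (n+1)) F :=
  of fun i j =>
    Fin.cases (Fin.cases (1:F) (fun _ => (0:F)) j)
      (fun i' => Fin.cases (0:F) (fun j' => δ i' j') j) i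

@[simp] lemma matRed_apply (n : ℕ) (A : Matrix (Fin (n+1)) (Fin (n+1)) F) (i j : Fin n) :
    matRed n A i j = A i.succ j.succ := rfl

@[simp] lemma matEmb_00 (n : ℕ) (δ : Matrix (Fin n) (Fin n) F) : matEmb n δ 0 0 = 1 := rfl

@[simp] lemma matEmb_0succ (n : ℕ) (δ : Matrix (Fin n) (Fin n) F) (j : Fin n) :
    matEmb n δ 0 j.succ = 0 := by simp [matEmb]

@[simp] lemma matEmb_succ0 (n : ℕ) (δ : Matrix (Fin n) (Fin n) F) (i : Fin n) :
    matEmb n δ i.succ 0 = 0 := by simp [matEmb]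

@[simp] lemma matEmb_succsucc (n : ℕ) (δ : Matrix (Fin n) (Fin n) F) (i j : Fin n) :
    matEmb n δ i.succ j.succ = δ i j := by simp [matEmb]

lemma row_zero_eq (n : ℕ) (A : Matrix (Fin (n+1)) (Fin (n+1)) F) (hA : Aᵀ * A = 1)
    (hcol : (fun i => A i 0) = Pi.single 0 1) (j : Fin n) : A 0 j.succ = 0 := by
  have h1 : (Aᵀ * A) 0 j.succ = (1 : Matrix (Fin (n+1)) (Fin (n+1)) F) 0 j.succ := by rw [hA]
  rw [mul_apply, one_apply_ne (Fin.succ_ne_zero j).symm] at h1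
  have h2 : ∀ k, Aᵀ 0 k * A k j.succ = Pi.single (M := fun _ => F) 0 1 k * A k j.succ := by
    intro k; rw [transpose_apply, congrFun hcol k]
  rw [Finset.sum_congr rfl fun k _ => h2 k, Fin.sum_univ_succ] at h1
  have h3 : ∀ k : Fin n, Pi.single (M := fun _ => F) 0 1 k.succ * A k.succ j.succ = 0 :=
    fun k => by rw [Pi.single_eq_of_ne (Fin.succ_ne_zero k), zero_mul]
  rw [Finset.sum_congr rfl fun k _ => h3 k, Finset.sum_const_zero, add_zero] at h1
  simpa using h1

lemma matRed_orth (n : ℕ) (A : Matrix (Fin (n+1)) (Fin (n+1)) F) (hA : Aᵀ * A = 1)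
    (hcol : (fun i => A i 0) = Pi.single 0 1) : (matRed n A)ᵀ * matRed n A = 1 := by
  ext i j
  have h1 : (Aᵀ * A) i.succ j.succ = (1 : Matrix (Fin (n+1)) (Fin (n+1)) F) i.succ j.succ := by
    rw [hA]
  rw [mul_apply, Fin.sum_univ_succ, transpose_apply, row_zero_eq n A hA hcol i,
    zero_mul, zero_add] at h1
  rw [mul_apply]
  calc ∑ k : Fin n, (matRed n A)ᵀ i k * matRed n A k j
      = ∑ k : Fin n, Aᵀ i.succ k.succ * A k.succ j.succ := by
        refine Finset.sum_congr rfl fun k _ => ?_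
        simp [transpose_apply]
    _ = (1 : Matrix (Fin (n+1)) (Fin (n+1)) F) i.succ j.succ := h1
    _ = (1 : Matrix (Fin n) (Fin n) F) i j := by
        by_cases h : i = j
        · subst h; rw [one_apply_eq, one_apply_eq]
        · rw [one_apply_ne (fun hh => h (Fin.succ_injective n hh)), one_apply_ne h]

lemma matEmb_orth (n : ℕ) (δ : Matrix (Fin n) (Fin n) F) (hδ : δᵀ * δ = 1) :
    (matEmb n δ)ᵀ * matEmb n δ = 1 := by
  ext i j
  rw [mul_apply]
  induction i using Fin.cases with
  | zero =>
    induction j using Fin.cases with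
    | zero => simp [Fin.sum_univ_succ]
    | succ j' => simp [Fin.sum_univ_succ, one_apply_ne (Fin.succ_ne_zero j').symm]
  | succ i' =>
    induction j using Fin.cases with
    | zero => simp [Fin.sum_univ_succ, one_apply_ne (Fin.succ_ne_zero i')]
    | succ j' =>
      have h1 : (δᵀ * δ) i' j' = (1 : Matrix (Fin n) (Fin n) F) i' j' := by rw [hδ]
      rw [mul_apply] at h1
      simp only [Fin.sum_univ_succ, transpose_apply, matEmb_0succ, matEmb_succsucc, zero_mul,
        zero_add]
      have h3 : ∑ k : Fin n, δ k i' * δ k j' = (1 : Matrix (Fin n) (Fin n) F) i' j' := by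
        rw [← h1]; exact Finset.sum_congr rfl fun k _ => rfl
      rw [h3]
      by_cases h : i' = j'
      · subst h; rw [one_apply_eq, one_apply_eq]
      · rw [one_apply_ne (fun hh => h (Fin.succ_injective n hh)), one_apply_ne h]

lemma matEmb_col (n : ℕ) (δ : Matrix (Fin n) (Fin n) F) :
    (fun i => matEmb n δ i 0) = Pi.single (M := fun _ => F) 0 1 := by
  funext i
  induction i using Fin.cases with
  | zero => simp
  | succ i' => simp [Pi.single_eq_of_ne (Fin.succ_ne_zero i')]

def stabEquiv (n : ℕ) :
    {A : Ogrp F (n+1) // (fun i => A.1 i 0) = Pi.single 0 1} ≃ Ogrp F n where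
  toFun A := ⟨matRed n A.1.1, matRed_orth n A.1.1 A.1.2 A.2⟩
  invFun δ := ⟨⟨matEmb n δ.1, matEmb_orth n δ.1 δ.2⟩, matEmb_col n δ.1⟩
  left_inv A := by
    refine Subtype.ext (Subtype.ext ?_)
    ext i j
    show matEmb n (matRed n A.1.1) i j = A.1.1 i j
    induction i using Fin.cases with
    | zero =>
      induction j using Fin.cases with
      | zero =>
        rw [matEmb_00]
        have := congrFun A.2 0
        simp at this
        exact this.symm
      | succ j' => rw [matEmb_0succ, row_zero_eq n A.1.1 A.1.2 A.2 j']
    | succ i' =>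
      induction j using Fin.cases with
      | zero =>
        rw [matEmb_succ0]
        have := congrFun A.2 i'.succ
        replace this : A.1.1 i'.succ 0 = Pi.single (M := fun _ => F) 0 1 i'.succ := this
        rw [this, Pi.single_eq_of_ne (Fin.succ_ne_zero i')]
      | succ j' => rw [matEmb_succsucc]; rfl
  right_inv δ := by
    refine Subtype.ext ?_
    ext i j
    show matRed n (matEmb n δ.1) i j = δ.1 i j
    rw [matRed_apply, matEmb_succsucc]
end grp



section grp2
variable {F : Type*} [Field F] [Fintype F] [DecidableEq F]

lemma orth_mul {n : ℕ} {A B : Matrix (Fin n) (Fin n) F} (hA : Aᵀ * A = 1) (hB : Bᵀ * B = 1) :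
    (A * B)ᵀ * (A * B) = 1 := by
  rw [transpose_mul, mul_assoc, ← mul_assoc Aᵀ A B, hA, one_mul, hB]

lemma orth_transpose {n : ℕ} {A : Matrix (Fin n) (Fin n) F} (hA : Aᵀ * A = 1) :
    (Aᵀ)ᵀ * Aᵀ = 1 := by
  rw [transpose_transpose]
  exact mul_eq_one_comm.mp hA

lemma col0_mul {n : ℕ} (M N : Matrix (Fin (n+1)) (Fin (n+1)) F) :
    (fun i => (M * N) i 0) = M *ᵥ (fun k => N k 0) := by
  funext i
  simp [mul_apply, mulVec, dotProduct]

lemma single_sum_one (n : ℕ) :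
    ∑ i : Fin (n+1), Pi.single (M := fun _ => F) 0 1 i * Pi.single (M := fun _ => F) 0 1 i
      = 1 := by
  rw [Fin.sum_univ_succ]
  have : ∀ k : Fin n, Pi.single (M := fun _ => F) 0 1 k.succ = 0 :=
    fun k => Pi.single_eq_of_ne (Fin.succ_ne_zero k) 1
  simp [this]

def colMap {n : ℕ} (A : Ogrp F (n+1)) : {v : Fin (n+1) → F // ∑ i, v i * v i = 1} := by
  refine ⟨fun i => A.1 i 0, ?_⟩
  have h1 : (A.1ᵀ * A.1) 0 0 = (1 : Matrix (Fin (n+1)) (Fin (n+1)) F) 0 0 := by rw [A.2]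
  rw [mul_apply, one_apply_eq] at h1
  rw [← h1]
  exact Finset.sum_congr rfl fun k _ => rfl

def e0sph (n : ℕ) : {v : Fin (n+1) → F // ∑ i, v i * v i = 1} :=
  ⟨Pi.single 0 1, single_sum_one n⟩

noncomputable def fiberEquiv (hF : ringChar F ≠ 2) (n : ℕ)
    (v : {v : Fin (n+1) → F // ∑ i, v i * v i = 1}) :
    {A : Ogrp F (n+1) // colMap A = v} ≃ {A : Ogrp F (n+1) // colMap A = e0sph n} := by
  have hv : v.1 ⬝ᵥ v.1 = 1 := v.2
  set B := (exists_orth_mulVec hF n v.1 hv).choose with hBdef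
  have hB : Bᵀ * B = 1 := (exists_orth_mulVec hF n v.1 hv).choose_spec.1
  have hBe : B *ᵥ Pi.single 0 1 = v.1 := (exists_orth_mulVec hF n v.1 hv).choose_spec.2
  have hBB : B * Bᵀ = 1 := mul_eq_one_comm.mp hB
  refine ⟨fun A => ⟨⟨Bᵀ * A.1.1, orth_mul (orth_transpose hB) A.1.2⟩, ?_⟩,
    fun C => ⟨⟨B * C.1.1, orth_mul hB C.1.2⟩, ?_⟩, ?_, ?_⟩
  · -- column of Bᵀ * A is e₀
    refine Subtype.ext ?_
    show (fun i => (Bᵀ * A.1.1) i 0) = Pi.single 0 1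
    have hcolA : (fun i => A.1.1 i 0) = v.1 := congrArg Subtype.val A.2
    rw [col0_mul, hcolA, ← hBe, mulVec_mulVec, hB, one_mulVec]
  · refine Subtype.ext ?_
    show (fun i => (B * C.1.1) i 0) = v.1
    have hcolC : (fun i => C.1.1 i 0) = Pi.single 0 1 := congrArg Subtype.val C.2
    rw [col0_mul, hcolC, hBe]
  · intro A
    refine Subtype.ext (Subtype.ext ?_)
    show B * (Bᵀ * A.1.1) = A.1.1
    rw [← mul_assoc, hBB, one_mul]
  · intro C
    refine Subtype.ext (Subtype.ext ?_)
    show Bᵀ * (B * C.1.1) = C.1.1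
    rw [← mul_assoc, hB, one_mul]

noncomputable def e0fiberEquiv (n : ℕ) :
    {A : Ogrp F (n+1) // colMap A = e0sph n} ≃ Ogrp F n :=
  ((Equiv.subtypeEquivRight (fun A => by
      rw [Subtype.ext_iff]
      exact Iff.rfl)).trans (stabEquiv n))

lemma card_Ogrp_succ (hF : ringChar F ≠ 2) (n : ℕ) :
    Fintype.card (Ogrp F (n+1)) =
      Fintype.card {v : Fin (n+1) → F // ∑ i, v i * v i = (1:F)} * Fintype.card (Ogrp F n) := by
  classical
  rw [← Fintype.card_congr (Equiv.sigmaFiberEquiv (colMap (F := F) (n := n))),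
    Fintype.card_sigma]
  have hfib : ∀ v : {v : Fin (n+1) → F // ∑ i, v i * v i = (1:F)},
      Fintype.card {A : Ogrp F (n+1) // colMap A = v} = Fintype.card (Ogrp F n) :=
    fun v => Fintype.card_congr ((fiberEquiv hF n v).trans (e0fiberEquiv n))
  rw [Finset.sum_congr rfl fun v _ => hfib v, Finset.sum_const, Finset.card_univ,
    smul_eq_mul]

end grp2


section bridge
variable {F : Type*} [Field F] [Fintype F] [DecidableEq F]
local notation "χ" => quadraticChar F
local notation "q" => (Fintype.card F : ℤ)
lemma sc_even_formula (hF : ringChar F ≠ 2) (t : ℕ) (b : F) :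
    (sc F (2*t+2) b : ℤ) =
      q^(2*t+1) + χ ((-1)^(t+1)) * (if b = 0 then q - 1 else -1) * q^t :=
  sc_even_step hF t (sc_odd_formula hF t) b
end bridge



section FIN
variable {F : Type*} [Field F] [Fintype F] [DecidableEq F]
local notation "χ" => quadraticChar F
local notation "q" => (Fintype.card F : ℤ)

lemma chi_pow_sq (M : ℕ) : (χ (-1))^M * (χ (-1))^M = 1 := by
  have h : χ (-1) * χ (-1) = 1 := by
    rcases quadraticChar_dichotomy (a := (-1 : F)) (neg_ne_zero.mpr one_ne_zero) with h | h <;>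
      rw [h] <;> norm_num
  rw [← mul_pow, h, one_pow]

lemma sc_odd_one (hF : ringChar F ≠ 2) (t : ℕ) :
    (sc F (2*t+1) (1:F) : ℤ) = q^(2*t) + (χ (-1))^t * q^t := by
  rw [sc_odd_formula hF t 1, mul_one, map_pow]

lemma sc_even_one (hF : ringChar F ≠ 2) (t : ℕ) :
    (sc F (2*t+2) (1:F) : ℤ) = q^(2*t+1) - (χ (-1))^(t+1) * q^t := by
  rw [sc_even_formula hF t 1, if_neg one_ne_zero, map_pow]
  ring

lemma card_Ogrp_formula (hF : ringChar F ≠ 2) (M : ℕ) (hM : 1 ≤ M) :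
    (Fintype.card (Ogrp F (2*M)) : ℤ) =
      2 * q^(M*M - M) * (q^M - (χ (-1))^M) * ∏ r ∈ Finset.Icc 1 (M-1), (q^(2*r) - 1) := by
  have cOs : ∀ n : ℕ, Fintype.card (Ogrp F (n+1)) = sc F (n+1) 1 * Fintype.card (Ogrp F n) :=
    fun n => card_Ogrp_succ hF n
  induction M, hM using Nat.le_induction with
  | base =>
    have h2 : Fintype.card (Ogrp F (2*1)) = sc F 2 1 * (sc F 1 1 * 1) := by
      rw [show (2*1) = 1+1 from rfl, cOs 1, show (1:ℕ) = 0+1 from rfl, cOs 0, card_Ogrp_zero]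
    rw [h2]
    push_cast
    have e1 : (sc F 1 1 : ℤ) = 2 := by
      have h := sc_odd_formula hF 0 (1:F)
      rw [show 2*0+1 = 1 from rfl] at h
      simpa using h
    have e2 : (sc F 2 1 : ℤ) = q - χ (-1) := by
      have h := sc_even_one hF 0
      rw [show 2*0+2 = 2 from rfl] at h
      rw [h]
      norm_num
    rw [e1, e2, show Finset.Icc 1 0 = (∅ : Finset ℕ) from Finset.Icc_eq_empty (by omega),
      Finset.prod_empty, pow_zero, pow_one, pow_one]
    ring
  | succ M hM IH =>
    have h2 : Fintype.card (Ogrp F (2*(M+1)))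
        = sc F (2*M+2) 1 * (sc F (2*M+1) 1 * Fintype.card (Ogrp F (2*M))) := by
      rw [show 2*(M+1) = (2*M+1)+1 by ring, cOs (2*M+1), show 2*M+1+1 = (2*M+2) from rfl,
        cOs (2*M), show 2*M+1 = 2*M+1 from rfl]
    rw [h2]
    push_cast
    rw [sc_even_one hF M, sc_odd_one hF M, IH]
    have hprod : ∏ r ∈ Finset.Icc 1 M, ((q:ℤ)^(2*r) - 1)
        = (∏ r ∈ Finset.Icc 1 (M-1), ((q:ℤ)^(2*r) - 1)) * (q^(2*M) - 1) := by
      have h5 : M = (M-1) + 1 := by omega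
      conv_lhs => rw [h5]
      rw [Finset.prod_Icc_succ_top (by omega : 1 ≤ (M-1)+1)]
      rw [show (M-1)+1 = M by omega]
    rw [hprod]
    have hMM : M ≤ M*M := Nat.le_mul_of_pos_left M hM
    have hexp1 : (q:ℤ)^(M*M - M) * (q^M * q^M) = q^((M+1)*(M+1) - (M+1)) := by
      rw [← pow_add, ← pow_add]
      congr 1
      have : (M+1)*(M+1) - (M+1) = M*M + M := by
        have h4 : (M+1)*(M+1) = M*M + 2*M + 1 := by ring
        omega
      omega
    have hq2M : (q:ℤ)^(2*M) = q^M * q^M := by rw [two_mul, pow_add]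
    have hq2M1 : (q:ℤ)^(2*M+1) = q^M * q^M * q := by rw [pow_succ, hq2M]
    have hB : (χ (-1 : F))^M * (χ (-1))^M = 1 := chi_pow_sq M
    set A := (q:ℤ)^M
    set B := (χ (-1 : F) : ℤ)^M
    set K := (q:ℤ)^(M*M - M)
    set P := ∏ r ∈ Finset.Icc 1 (M-1), ((q:ℤ)^(2*r) - 1)
    rw [hq2M1, hq2M]
    rw [pow_succ, pow_succ]
    rw [show ((M+1)*(M+1) - (M+1)) = (M*M - M) + M + M by
      have h4 : (M+1)*(M+1) = M*M + 2*M + 1 := by ring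
      omega]
    rw [pow_add, pow_add]
    linear_combination (-(2 * K * P * A * A * (A * q - (χ (-1 : F) : ℤ) * B))) * hB
  end FIN


theorem stmt_3 (p : ℕ) (hp : p.Prime) (hp2 : p ≠ 2) (m : ℕ) (hm : 2 ≤ m) (heven : Even m) :
    (Nat.card {γ : GL (Fin m) (ZMod p) //
        (γ : Matrix (Fin m) (Fin m) (ZMod p))ᵀ * (γ : Matrix (Fin m) (Fin m) (ZMod p)) = 1} : ℤ) =
      2 * (p : ℤ) ^ ((m ^ 2 - 2 * m) / 4) *
        ((p : ℤ) ^ (m / 2) - ((-1 : ℤ) ^ ((p - 1) / 2)) ^ (m / 2)) *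
        ∏ r ∈ Finset.Icc 1 (m / 2 - 1), ((p : ℤ) ^ (2 * r) - 1) := by
  haveI : Fact p.Prime := ⟨hp⟩
  have hF : ringChar (ZMod p) ≠ 2 := by
    rw [ZMod.ringChar_zmod_n]; exact hp2
  -- the GL subtype is the orthogonal group
  have e : {γ : GL (Fin m) (ZMod p) //
      (γ : Matrix (Fin m) (Fin m) (ZMod p))ᵀ * (γ : Matrix (Fin m) (Fin m) (ZMod p)) = 1}
      ≃ Ogrp (ZMod p) m := {
    toFun := fun g => ⟨(g.1 : Matrix (Fin m) (Fin m) (ZMod p)), g.2⟩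
    invFun := fun A => ⟨⟨A.1, A.1ᵀ, mul_eq_one_comm.mp A.2, A.2⟩, A.2⟩
    left_inv := fun g => Subtype.ext (Units.ext rfl)
    right_inv := fun A => rfl }
  rw [Nat.card_congr e, Nat.card_eq_fintype_card]
  obtain ⟨M, hm2⟩ : ∃ M, m = 2 * M := by
    obtain ⟨k, hk⟩ := heven
    exact ⟨k, by omega⟩
  have hM : 1 ≤ M := by omega
  subst hm2
  rw [card_Ogrp_formula hF M hM]
  have hcard : (Fintype.card (ZMod p) : ℤ) = (p : ℤ) := by rw [ZMod.card]
  have hchi : (quadraticChar (ZMod p) (-1) : ℤ) = (-1 : ℤ) ^ ((p - 1) / 2) := by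
    rw [quadraticChar_neg_one hF, ZMod.card]
    rw [ZMod.χ₄_eq_neg_one_pow (Nat.odd_iff.mp (hp.odd_of_ne_two hp2))]
    have hodd : p % 2 = 1 := Nat.odd_iff.mp (hp.odd_of_ne_two hp2)
    congr 1
    omega
  have hexp : ((2*M) ^ 2 - 2 * (2*M)) / 4 = M * M - M := by
    have h1 : (2*M)^2 = 4 * (M*M) := by ring
    have h2 : 2 * (2*M) = 4 * M := by ring
    have h3 : M ≤ M * M := Nat.le_mul_of_pos_left M hM
    omega
  have hM2 : 2 * M / 2 = M := by omega
  rw [hcard, hchi, hexp, hM2]
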